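/- Let Σ and S be symmetric real p×p matrices. The 2p×2p block matrix [[Σ, Σ−S],[Σ−S, Σ]] is positive semidefinite if and only if S is positive semidefinite and 2Σ − S is positive semidefinite. -/

import Mathlib

open Matrix

private lemma quad_identity {p : ℕ} (Sigma S : Matrix (Fin p) (Fin p) ℝ)
    (x y : Fin p → ℝ) :
    Sum.elim x y ⬝ᵥ ((Matrix.fromBlocks Sigma (Sigma - S) (Sigma - S) Sigma) *ᵥ Sum.elim x y)
      = (1/2) * ((x + y) ⬝ᵥ (((2 : ℝ) • Sigma - S) *ᵥ (x + y)))
        + (1/2) * ((x - y) ⬝ᵥ (S *ᵥ (x - y))) := by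
  rw [Matrix.fromBlocks_mulVec, sumElim_dotProduct_sumElim]
  simp only [Matrix.sub_mulVec, Matrix.mulVec_add, Matrix.mulVec_sub, Matrix.smul_mulVec,
    dotProduct_add, dotProduct_sub, add_dotProduct, sub_dotProduct, dotProduct_smul,
    smul_eq_mul, Sum.elim_comp_inl, Sum.elim_comp_inr]
  ring

/-- Equation (7): the extended covariance matrix `[[Σ, Σ−S],[Σ−S, Σ]]` is PSD
iff `S ⪰ 0` and `2Σ − S ⪰ 0`. -/
theorem stmt2 {p : ℕ} (Sigma S : Matrix (Fin p) (Fin p) ℝ)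
    (hSigma : Sigma.IsSymm) (hS : S.IsSymm) :
    (Matrix.fromBlocks Sigma (Sigma - S) (Sigma - S) Sigma).PosSemidef ↔
      S.PosSemidef ∧ ((2 : ℝ) • Sigma - S).PosSemidef := by
  have hSh : S.IsHermitian := hS
  have hSigmah : Sigma.IsHermitian := hSigma
  have hdiff : ((2 : ℝ) • Sigma - S).IsHermitian := by
    show _ = _
    rw [conjTranspose_sub, conjTranspose_smul, hSh.eq, hSigmah.eq, star_trivial]
  constructor
  · intro h
    refine ⟨.of_dotProduct_mulVec_nonneg hSh fun x => ?_, .of_dotProduct_mulVec_nonneg hdiff fun x => ?_⟩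
    · have := h.dotProduct_mulVec_nonneg (Sum.elim ((1/2 : ℝ) • x) (-((1/2 : ℝ) • x)))
      rw [star_trivial, quad_identity] at this
      simp only [add_neg_cancel, sub_neg_eq_add] at this
      rw [star_trivial]
      have h2 : (1/2 : ℝ) • x + (1/2 : ℝ) • x = x := by
        rw [← add_smul]; norm_num
      rw [h2] at this
      simpa using this
    · have := h.dotProduct_mulVec_nonneg (Sum.elim ((1/2 : ℝ) • x) ((1/2 : ℝ) • x))
      rw [star_trivial, quad_identity] at this
      simp only [sub_self] at this
      rw [star_trivial]
      have h2 : (1/2 : ℝ) • x + (1/2 : ℝ) • x = x := by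
        rw [← add_smul]; norm_num
      rw [h2] at this
      simpa using this
  · rintro ⟨h1, h2⟩
    refine .of_dotProduct_mulVec_nonneg ?_ ?_
    · show _ = _
      rw [fromBlocks_conjTranspose, hSigmah.eq,
        ((hSigmah.sub hSh) : (Sigma - S).IsHermitian).eq]
    · intro z
      have hz : z = Sum.elim (z ∘ Sum.inl) (z ∘ Sum.inr) := by
        funext i; cases i <;> rfl
      rw [star_trivial, hz, quad_identity]
      have a1 := h2.dotProduct_mulVec_nonneg (z ∘ Sum.inl + z ∘ Sum.inr)
      have a2 := h1.dotProduct_mulVec_nonneg (z ∘ Sum.inl - z ∘ Sum.inr)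
      rw [star_trivial] at a1 a2
      nlinarith
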